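/- Let L be a symmetric positive definite m×m real matrix and let K := L(L + I)^{-1}. Then for every subset J ⊆ {1,…,m}, ∑_{A : J ⊆ A ⊆ {1,…,m}} det(L_A) = det(K_J) · det(L + I). Equivalently, if Y is a random subset with distribution P_L(A) = det(L_A)/det(L + I), then P_L(J ⊆ Y) = E_{P_L}[1_{J⊆Y}] = det(K_J); i.e., the expectation parameters η_J of the log-linear embedding of the determinantal point process, evaluated at P_L, equal the principal minors det(K_J) of the marginal kernel K. -/

import Mathlib

/-- The determinant of the principal submatrix of `M` with rows and columns in `A`
(equal to `1` when `A = ∅`). -/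
noncomputable def pminor {m : ℕ} (M : Matrix (Fin m) (Fin m) ℝ) (A : Finset (Fin m)) : ℝ :=
  (M.submatrix (fun i : A => (i : Fin m)) (fun j : A => (j : Fin m))).det

lemma det_piecewise_one {m : ℕ} (M : Matrix (Fin m) (Fin m) ℝ) (A : Finset (Fin m)) :
    Matrix.det (Matrix.of (A.piecewise (fun i => M i) (fun i => (1 : Matrix (Fin m) (Fin m) ℝ) i)))
      = pminor M A := by
  classical
  set N : Matrix (Fin m) (Fin m) ℝ :=
    Matrix.of (A.piecewise (fun i => M i) (fun i => (1 : Matrix (Fin m) (Fin m) ℝ) i)) with hN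
  rw [← Matrix.det_submatrix_equiv_self (Equiv.sumCompl (· ∈ A)) N]
  have hblock : N.submatrix (Equiv.sumCompl (· ∈ A)) (Equiv.sumCompl (· ∈ A)) =
      Matrix.fromBlocks (M.submatrix (fun i : A => (i : Fin m)) (fun j : A => (j : Fin m)))
        (M.submatrix (fun i : A => (i : Fin m)) (fun j : {x : Fin m // ¬ x ∈ A} => (j : Fin m)))
        0 1 := by
    ext i j
    cases i with
    | inl a =>
      cases j with
      | inl b => simp [hN, Finset.piecewise, a.2]
      | inr b => simp [hN, Finset.piecewise, a.2]
    | inr a =>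
      cases j with
      | inl b =>
        have h : (a : Fin m) ≠ (b : Fin m) := fun h => a.2 (h ▸ b.2)
        simp [hN, Finset.piecewise, a.2, Matrix.one_apply, h]
      | inr b =>
        simp [hN, Finset.piecewise, a.2, Matrix.one_apply, Subtype.ext_iff]
  rw [hblock, Matrix.det_fromBlocks_zero₂₁, Matrix.det_one, mul_one, pminor]

lemma det_add_diagonal {m : ℕ} (M : Matrix (Fin m) (Fin m) ℝ) (d : Fin m → ℝ) :
    (M + Matrix.diagonal d).det
      = ∑ A : Finset (Fin m), (∏ i ∈ Aᶜ, d i) * pminor M A := by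
  classical
  have h0 : (M + Matrix.diagonal d).det
      = Matrix.detRowAlternating ((fun i => M i) + (fun i => Matrix.diagonal d i)) := rfl
  have hadd := MultilinearMap.map_add_univ
    (Matrix.detRowAlternating (R := ℝ) (n := Fin m)).toMultilinearMap
    (fun i => M i) (fun i => Matrix.diagonal d i)
  simp only [AlternatingMap.coe_multilinearMap] at hadd
  rw [h0, hadd]
  refine Finset.sum_congr rfl fun A _ => ?_
  have h1 : A.piecewise (fun i => M i) (fun i => Matrix.diagonal d i)
      = fun i => (if i ∈ A then (1:ℝ) else d i) •
          (A.piecewise (fun i => M i) (fun i => (1 : Matrix (Fin m) (Fin m) ℝ) i)) i := by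
    funext i j
    by_cases hi : i ∈ A <;>
      simp [Finset.piecewise, hi, Matrix.diagonal, Matrix.one_apply, mul_ite]
  have hs := MultilinearMap.map_smul_univ
    (Matrix.detRowAlternating (R := ℝ) (n := Fin m)).toMultilinearMap
    (fun i => if i ∈ A then (1:ℝ) else d i)
    (A.piecewise (fun i => M i) (fun i => (1 : Matrix (Fin m) (Fin m) ℝ) i))
  simp only [AlternatingMap.coe_multilinearMap] at hs
  rw [h1, hs]
  have h2 : (∏ i, (if i ∈ A then (1:ℝ) else d i)) = ∏ i ∈ Aᶜ, d i := by
    rw [← Finset.prod_mul_prod_compl A]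
    simp [Finset.prod_ite_of_true, Finset.prod_congr rfl]
    · exact Finset.prod_congr rfl fun i hi => by simp [Finset.mem_compl.mp hi]
  rw [← h2]
  have h3 : Matrix.detRowAlternating
      (A.piecewise (fun i => M i) (fun i => (1 : Matrix (Fin m) (Fin m) ℝ) i)) = pminor M A :=
    det_piecewise_one M A
  rw [smul_eq_mul, h3]

/-- The `L`-ensemble determinantal point process. -/
noncomputable def dppP {m : ℕ} (L : Matrix (Fin m) (Fin m) ℝ) (A : Finset (Fin m)) : ℝ :=
  pminor L A / (L + 1).det

theorem dpp_marginal_kernel (m : ℕ) (L : Matrix (Fin m) (Fin m) ℝ)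
    (hsymm : L.IsSymm) (hL : L.PosDef)
    (K : Matrix (Fin m) (Fin m) ℝ) (hK : K = L * (L + 1)⁻¹) (J : Finset (Fin m)) :
    (∑ A : Finset (Fin m), (if J ⊆ A then pminor L A else 0)
        = pminor K J * (L + 1).det) ∧
    (∑ A : Finset (Fin m), dppP L A * (if J ⊆ A then 1 else 0) = pminor K J) := by
  classical
  set N : Matrix (Fin m) (Fin m) ℝ := L + 1 with hNdef
  have hNpd : N.PosDef := hL.add Matrix.PosDef.one
  have hNunit : IsUnit N.det := hNpd.det_pos.ne'.isUnit
  have hNdet : N.det ≠ 0 := hNpd.det_pos.ne'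
  set d : Fin m → ℝ := fun i => if i ∈ J then 0 else 1 with hd
  -- LHS = det (L + diagonal d)
  have key1 : (∑ A : Finset (Fin m), (if J ⊆ A then pminor L A else 0))
      = (L + Matrix.diagonal d).det := by
    rw [det_add_diagonal]
    refine Finset.sum_congr rfl fun A _ => ?_
    by_cases hJA : J ⊆ A
    · have : (∏ i ∈ Aᶜ, d i) = 1 := by
        refine Finset.prod_eq_one fun i hi => ?_
        have : i ∉ J := fun h => (Finset.mem_compl.mp hi) (hJA h)
        simp [hd, this]
      rw [this, if_pos hJA, one_mul]
    · obtain ⟨j, hjJ, hjA⟩ := Finset.not_subset.mp hJA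
      have : (∏ i ∈ Aᶜ, d i) = 0 :=
        Finset.prod_eq_zero (Finset.mem_compl.mpr hjA) (by simp [hd, hjJ])
      rw [this, if_neg hJA, zero_mul]
  -- the 0/1 rectangular matrix picking out coordinates of J
  set E : Matrix (Fin m) {x // x ∈ J} ℝ := fun i j => if i = (j : Fin m) then 1 else 0 with hE
  have hP : Matrix.diagonal (fun i => if i ∈ J then (1:ℝ) else 0) = E * E.transpose := by
    ext i k
    simp only [Matrix.mul_apply, Matrix.transpose_apply]
    simp only [hE]
    by_cases hiJ : i ∈ J
    · rw [Fintype.sum_eq_single (⟨i, hiJ⟩ : {x // x ∈ J})]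
      · by_cases hik : i = k
        · subst hik; simp [hiJ]
        · simp [Matrix.diagonal_apply_ne _ hik, Ne.symm hik]
      · intro b hb
        have h : i ≠ (b : Fin m) := fun h => hb (Subtype.ext h.symm)
        simp [h]
    · have hik' : ∀ b : {x // x ∈ J}, i ≠ (b : Fin m) := fun b h => hiJ (h ▸ b.2)
      simp [Matrix.diagonal_apply, hiJ, hik']
  have hLd : L + Matrix.diagonal d = N - E * E.transpose := by
    rw [← hP, hNdef]
    have h1 : (1 : Matrix (Fin m) (Fin m) ℝ) = Matrix.diagonal (fun _ => (1:ℝ)) := by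
      simp [Matrix.diagonal_one]
    have hdf : d = fun i => 1 - (if i ∈ J then (1:ℝ) else 0) := by
      funext i; by_cases hiJ : i ∈ J <;> simp [hd, hiJ]
    rw [add_sub_assoc, h1, Matrix.diagonal_sub, hdf]
  -- Schur trick
  have hfact : N - E * E.transpose = N * (1 - N⁻¹ * (E * E.transpose)) := by
    rw [Matrix.mul_sub, mul_one, ← Matrix.mul_assoc, Matrix.mul_nonsing_inv _ hNunit, one_mul]
  have hsub : E.transpose * N⁻¹ * E =
      (N⁻¹).submatrix (fun i : J => (i : Fin m)) (fun j : J => (j : Fin m)) := by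
    ext a b
    simp only [Matrix.mul_apply, Matrix.transpose_apply]
    simp [Matrix.mul_assoc, Matrix.mul_apply, hE, ite_mul, mul_ite,
      Finset.sum_ite_eq', Finset.sum_ite_eq]
  have hKN : K = 1 - N⁻¹ := by
    rw [hK]
    have hLN : L = N - 1 := by rw [hNdef, add_sub_cancel_right]
    rw [hLN, Matrix.sub_mul, Matrix.mul_nonsing_inv _ hNunit, one_mul]
  have hone : ((1 : Matrix (Fin m) (Fin m) ℝ)).submatrix
      (fun i : J => (i : Fin m)) (fun j : J => (j : Fin m)) = 1 := by
    ext a b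
    simp only [Matrix.submatrix_apply, Matrix.one_apply, Subtype.coe_inj]
  have key2 : (1 - N⁻¹ * (E * E.transpose)).det = pminor K J := by
    rw [← Matrix.mul_assoc, Matrix.det_one_sub_mul_comm, ← Matrix.mul_assoc, hsub, pminor, hKN,
      Matrix.submatrix_sub]
    simp only [Pi.sub_apply, hone]
  have main : (∑ A : Finset (Fin m), (if J ⊆ A then pminor L A else 0))
      = pminor K J * N.det := by
    rw [key1, hLd, hfact, Matrix.det_mul, ← key2, mul_comm]
  refine ⟨main, ?_⟩
  have : ∀ A : Finset (Fin m), dppP L A * (if J ⊆ A then 1 else 0)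
      = (if J ⊆ A then pminor L A else 0) / N.det := by
    intro A
    by_cases h : J ⊆ A <;> simp [dppP, h, hNdef]
  rw [Finset.sum_congr rfl fun A _ => this A, ← Finset.sum_div, main,
    mul_div_assoc, div_self hNdet, mul_one]
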